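/- Let a_1 < ... < a_n be integers, let Ω be the set of upper triangular matrices in Mat_n(ℤ) with diagonal (a_1, ..., a_n), and let Ω₀ ⊆ Ω consist of those matrices (c_{ij}) with 0 ≤ c_{ij} < a_j − a_i for all i < j. Then every matrix in Ω is conjugate, by a unipotent upper triangular matrix in GL_n(ℤ), to a matrix in Ω₀. -/

import Mathlib

open Matrix

namespace Stmt4Aux

variable {n : ℕ}

lemma EE_zero (t : ℤ) (i k : Fin n) (h : i ≠ k) :
    Matrix.single i k t * Matrix.single i k t = 0 :=
  Matrix.single_mul_single_of_ne t i k i (Ne.symm h) t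

lemma E_mul_inv (t : ℤ) (i k : Fin n) (h : i ≠ k) :
    (1 + Matrix.single i k t) * (1 - Matrix.single i k t) = 1 := by
  have h0 := EE_zero t i k h
  simp [mul_sub, add_mul, h0]

lemma E_inv_mul (t : ℤ) (i k : Fin n) (h : i ≠ k) :
    (1 - Matrix.single i k t) * (1 + Matrix.single i k t) = 1 := by
  have h0 := EE_zero t i k h
  simp [mul_add, sub_mul, h0]

lemma E_mul_apply (t : ℤ) (i k : Fin n) (A : Matrix (Fin n) (Fin n) ℤ) (p q : Fin n) :
    (Matrix.single i k t * A) p q = if p = i then t * A k q else 0 := by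
  by_cases h : p = i
  · subst h; simp
  · simp [Matrix.single_mul_apply_of_ne (h := h), h]

lemma mul_E_apply (t : ℤ) (i k : Fin n) (A : Matrix (Fin n) (Fin n) ℤ) (p q : Fin n) :
    (A * Matrix.single i k t) p q = if q = k then A p i * t else 0 := by
  by_cases h : q = k
  · subst h; simp
  · simp [Matrix.mul_single_apply_of_ne (hbj := h), h]

lemma conj_apply (t : ℤ) (i k : Fin n) (A : Matrix (Fin n) (Fin n) ℤ)
    (hki : A k i = 0) (p q : Fin n) :
    ((1 + Matrix.single i k t) * A * (1 - Matrix.single i k t)) p q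
      = A p q + t * ((if p = i then A k q else 0) - (if q = k then A p i else 0)) := by
  have expand : (1 + Matrix.single i k t) * A * (1 - Matrix.single i k t)
      = A + Matrix.single i k t * A - A * Matrix.single i k t
        - Matrix.single i k t * A * Matrix.single i k t := by
    simp only [add_mul, one_mul, mul_sub, mul_one]
    abel
  rw [expand]
  have h3 : (Matrix.single i k t * A * Matrix.single i k t) p q = 0 := by
    rw [mul_E_apply, E_mul_apply]
    by_cases h : q = k <;> by_cases h' : p = i <;> simp [h, h', hki]
  simp only [Matrix.sub_apply, Matrix.add_apply, E_mul_apply, mul_E_apply, h3]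
  by_cases h : q = k <;> by_cases h' : p = i <;> simp [h, h'] <;> ring

lemma E_tri (t : ℤ) (i k : Fin n) (h : i < k) :
    (1 + Matrix.single i k t : Matrix (Fin n) (Fin n) ℤ).BlockTriangular id := by
  intro p q hpq
  simp only [Matrix.add_apply, Matrix.one_apply, Matrix.single, Matrix.of_apply]
  have hpq' : q < p := hpq
  have h1 : ¬ p = q := fun hc => absurd hc.symm (ne_of_lt hpq')
  have h2 : ¬ (i = p ∧ k = q) := by
    rintro ⟨rfl, rfl⟩; exact absurd (h.trans hpq') (lt_irrefl _)
  simp [h1, h2]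

lemma E_tri' (t : ℤ) (i k : Fin n) (h : i < k) :
    (1 - Matrix.single i k t : Matrix (Fin n) (Fin n) ℤ).BlockTriangular id := by
  intro p q hpq
  simp only [Matrix.sub_apply, Matrix.one_apply, Matrix.single, Matrix.of_apply]
  have hpq' : q < p := hpq
  have h1 : ¬ p = q := fun hc => absurd hc.symm (ne_of_lt hpq')
  have h2 : ¬ (i = p ∧ k = q) := by
    rintro ⟨rfl, rfl⟩; exact absurd (h.trans hpq') (lt_irrefl _)
  simp [h1, h2]

lemma E_diag (t : ℤ) (i k : Fin n) (h : i ≠ k) (p : Fin n) :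
    (1 + Matrix.single i k t : Matrix (Fin n) (Fin n) ℤ) p p = 1 := by
  simp only [Matrix.add_apply, Matrix.one_apply_eq, Matrix.single, Matrix.of_apply]
  have : ¬ (i = p ∧ k = p) := by rintro ⟨rfl, rfl⟩; exact h rfl
  simp [this]

lemma E_diag' (t : ℤ) (i k : Fin n) (h : i ≠ k) (p : Fin n) :
    (1 - Matrix.single i k t : Matrix (Fin n) (Fin n) ℤ) p p = 1 := by
  simp only [Matrix.sub_apply, Matrix.one_apply_eq, Matrix.single, Matrix.of_apply]
  have : ¬ (i = p ∧ k = p) := by rintro ⟨rfl, rfl⟩; exact h rfl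
  simp [this]

lemma diag_mul {M N : Matrix (Fin n) (Fin n) ℤ} (hM : M.BlockTriangular id)
    (hN : N.BlockTriangular id) (i : Fin n) : (M * N) i i = M i i * N i i := by
  rw [Matrix.mul_apply]
  apply Finset.sum_eq_single i
  · intro k _ hk
    rcases lt_or_gt_of_ne hk with h | h
    · rw [hM h, zero_mul]
    · rw [hN h, mul_zero]
  · intro h; exact absurd (Finset.mem_univ i) h

/-- Inner induction: fix all entries at distance `d+1` with row index `< m`. -/
lemma fix (a : Fin n → ℤ) (ha : StrictMono a) (d : ℕ) (m : ℕ) :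
    ∀ A : Matrix (Fin n) (Fin n) ℤ, A.BlockTriangular id → (∀ i, A i i = a i) →
    (∀ i j : Fin n, i < j → (j : ℕ) ≤ (i : ℕ) + d → 0 ≤ A i j ∧ A i j < a j - a i) →
    ∃ P Q : Matrix (Fin n) (Fin n) ℤ, P * Q = 1 ∧ Q * P = 1 ∧
      P.BlockTriangular id ∧ Q.BlockTriangular id ∧
      (∀ i, P i i = 1) ∧ (∀ i, Q i i = 1) ∧
      (P * A * Q).BlockTriangular id ∧ (∀ i, (P * A * Q) i i = a i) ∧
      (∀ i j : Fin n, i < j → (j : ℕ) ≤ (i : ℕ) + d →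
        0 ≤ (P * A * Q) i j ∧ (P * A * Q) i j < a j - a i) ∧
      (∀ i j : Fin n, i < j → (j : ℕ) = (i : ℕ) + d + 1 → (i : ℕ) < m →
        0 ≤ (P * A * Q) i j ∧ (P * A * Q) i j < a j - a i) := by
  induction m with
  | zero =>
    intro A hA hAd hgood
    refine ⟨1, 1, one_mul 1, one_mul 1, blockTriangular_one, blockTriangular_one,
      fun i => Matrix.one_apply_eq i, fun i => Matrix.one_apply_eq i, ?_, ?_, ?_, ?_⟩
    · simpa using hA
    · simpa using hAd
    · simpa using hgood
    · intro i j hij hj hi; omega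
  | succ m ih =>
    intro A hA hAd hgood
    obtain ⟨P, Q, hPQ, hQP, hPt, hQt, hPd, hQd, hBt, hBd, hBgood, hBpart⟩ := ih A hA hAd hgood
    set B := P * A * Q with hB
    by_cases hn : m + d + 1 < n
    · -- fix entry (m, m+d+1)
      set i0 : Fin n := ⟨m, by omega⟩
      set k0 : Fin n := ⟨m + d + 1, hn⟩
      have hi0 : (i0 : ℕ) = m := rfl
      have hk0 : (k0 : ℕ) = m + d + 1 := rfl
      have hik : i0 < k0 := by rw [Fin.lt_def, hi0, hk0]; omega
      have hikne : i0 ≠ k0 := ne_of_lt hik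
      have hD : 0 < a k0 - a i0 := sub_pos.mpr (ha hik)
      set t : ℤ := -(B i0 k0 / (a k0 - a i0)) with ht
      set E : Matrix (Fin n) (Fin n) ℤ := 1 + Matrix.single i0 k0 t with hE
      set E' : Matrix (Fin n) (Fin n) ℤ := 1 - Matrix.single i0 k0 t with hE'
      have hEE' : E * E' = 1 := E_mul_inv t i0 k0 hikne
      have hE'E : E' * E = 1 := E_inv_mul t i0 k0 hikne
      have hki0 : B k0 i0 = 0 := hBt hik
      have key : ∀ p q, (E * B * E') p q
          = B p q + t * ((if p = i0 then B k0 q else 0) - (if q = k0 then B p i0 else 0)) :=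
        conj_apply t i0 k0 B hki0
      refine ⟨E * P, Q * E', ?_, ?_, (E_tri t i0 k0 hik).mul hPt, hQt.mul (E_tri' t i0 k0 hik),
        ?_, ?_, ?_, ?_, ?_, ?_⟩
      · calc E * P * (Q * E') = E * (P * Q) * E' := by noncomm_ring
        _ = 1 := by rw [hPQ, mul_one, hEE']
      · calc Q * E' * (E * P) = Q * (E' * E) * P := by noncomm_ring
        _ = 1 := by rw [hE'E, mul_one, hQP]
      · intro i
        rw [diag_mul (E_tri t i0 k0 hik) hPt, E_diag t i0 k0 hikne, one_mul, hPd]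
      · intro i
        rw [diag_mul hQt (E_tri' t i0 k0 hik), E_diag' t i0 k0 hikne, mul_one, hQd]
      all_goals
        have hassoc : E * P * A * (Q * E') = E * B * E' := by rw [hB]; noncomm_ring
        rw [hassoc]
      · -- triangular
        intro p q hpq
        have hpq' : (q : Fin n) < p := hpq
        rw [key]
        have h1 : B p q = 0 := hBt hpq
        have h2 : (if p = i0 then B k0 q else 0) = 0 := by
          by_cases h : p = i0
          · subst h; rw [hBt (lt_trans hpq' hik)]; simp
          · simp [h]
        have h3 : (if q = k0 then B p i0 else 0) = 0 := by
          by_cases h : q = k0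
          · subst h; rw [hBt (lt_trans hik hpq')]; simp
          · simp [h]
        rw [h1, h2, h3]; ring
      · -- diagonal
        intro p
        rw [key]
        have h2 : (if p = i0 then B k0 p else 0) = 0 := by
          by_cases h : p = i0
          · subst h; rw [hki0]; simp
          · simp [h]
        have h3 : (if p = k0 then B p i0 else 0) = 0 := by
          by_cases h : p = k0
          · subst h; rw [hki0]; simp
          · simp [h]
        rw [h2, h3, hBd]; ring
      · -- good at distance ≤ d
        intro p q hpq hqd
        rw [key]
        have h2 : (if p = i0 then B k0 q else 0) = 0 := by
          by_cases h : p = i0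
          · subst h
            have : (q : ℕ) < (k0 : ℕ) := by rw [hk0]; rw [hi0] at hqd; omega
            rw [hBt (by exact this)]; simp
          · simp [h]
        have h3 : (if q = k0 then B p i0 else 0) = 0 := by
          by_cases h : q = k0
          · subst h
            have : (i0 : ℕ) < (p : ℕ) := by
              have h5 : (p : ℕ) < (k0 : ℕ) := hpq
              rw [hk0] at hqd h5; rw [hi0]; omega
            rw [hBt (by exact this)]; simp
          · simp [h]
        rw [h2, h3]
        have := hBgood p q hpq hqd
        constructor
        · linarith [this.1]
        · linarith [this.2]
      · -- good at distance d+1 for rows < m+1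
        intro p q hpq hqd hpm
        rw [key]
        by_cases hp : p = i0
        · subst hp
          have hq : q = k0 := by
            apply Fin.ext; rw [hk0]; rw [hi0] at hqd; omega
          subst hq
          rw [if_pos rfl, if_pos rfl, hBd, hBd]
          have hmod : B i0 k0 + t * (a k0 - a i0) = B i0 k0 % (a k0 - a i0) := by
            rw [Int.emod_def, ht]; ring
          rw [hmod]
          exact ⟨Int.emod_nonneg _ (ne_of_gt hD), Int.emod_lt_of_pos _ hD⟩
        · have hpm' : (p : ℕ) < m := by
            have : (p : ℕ) ≠ m := fun hc => hp (Fin.ext (hc.trans hi0.symm))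
            omega
          have hq : ¬ q = k0 := by
            intro hc; subst hc
            rw [hk0] at hqd; omega
          rw [if_neg hp, if_neg hq]
          have := hBpart p q hpq hqd hpm'
          constructor
          · linarith [this.1]
          · linarith [this.2]
    · -- nothing to fix at this row
      refine ⟨P, Q, hPQ, hQP, hPt, hQt, hPd, hQd, hBt, hBd, hBgood, ?_⟩
      intro i j hij hj hi
      by_cases him : (i : ℕ) < m
      · exact hBpart i j hij hj him
      · exfalso
        have : (i : ℕ) = m := by omega
        have := j.isLt
        omega

lemma key (a : Fin n → ℤ) (ha : StrictMono a) (d : ℕ) :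
    ∀ A : Matrix (Fin n) (Fin n) ℤ, A.BlockTriangular id → (∀ i, A i i = a i) →
    ∃ P Q : Matrix (Fin n) (Fin n) ℤ, P * Q = 1 ∧ Q * P = 1 ∧
      P.BlockTriangular id ∧ Q.BlockTriangular id ∧
      (∀ i, P i i = 1) ∧ (∀ i, Q i i = 1) ∧
      (P * A * Q).BlockTriangular id ∧ (∀ i, (P * A * Q) i i = a i) ∧
      (∀ i j : Fin n, i < j → (j : ℕ) ≤ (i : ℕ) + d →
        0 ≤ (P * A * Q) i j ∧ (P * A * Q) i j < a j - a i) := by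
  induction d with
  | zero =>
    intro A hA hAd
    refine ⟨1, 1, one_mul 1, one_mul 1, blockTriangular_one, blockTriangular_one,
      fun i => Matrix.one_apply_eq i, fun i => Matrix.one_apply_eq i, ?_, ?_, ?_⟩
    · simpa using hA
    · simpa using hAd
    · intro i j hij hj
      have : (i : ℕ) < j := hij
      omega
  | succ d ih =>
    intro A hA hAd
    obtain ⟨P, Q, hPQ, hQP, hPt, hQt, hPd, hQd, hBt, hBd, hBgood⟩ := ih A hA hAd
    obtain ⟨P', Q', hPQ', hQP', hPt', hQt', hPd', hQd', hBt', hBd', hBgood', hBpart'⟩ :=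
      fix a ha d n (P * A * Q) hBt hBd hBgood
    refine ⟨P' * P, Q * Q', ?_, ?_, hPt'.mul hPt, hQt.mul hQt', ?_, ?_, ?_, ?_, ?_⟩
    · calc P' * P * (Q * Q') = P' * (P * Q) * Q' := by noncomm_ring
      _ = 1 := by rw [hPQ, mul_one, hPQ']
    · calc Q * Q' * (P' * P) = Q * (Q' * P') * P := by noncomm_ring
      _ = 1 := by rw [hQP', mul_one, hQP]
    · intro i; rw [diag_mul hPt' hPt, hPd', hPd, one_mul]
    · intro i; rw [diag_mul hQt hQt', hQd, hQd', one_mul]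
    all_goals
      have hassoc : P' * P * A * (Q * Q') = P' * (P * A * Q) * Q' := by noncomm_ring
      rw [hassoc]
    · exact hBt'
    · exact hBd'
    · intro i j hij hj
      by_cases h : (j : ℕ) ≤ (i : ℕ) + d
      · exact hBgood' i j hij h
      · have hj' : (j : ℕ) = (i : ℕ) + d + 1 := by omega
        exact hBpart' i j hij hj' i.isLt

end Stmt4Aux

/-- Every upper triangular integer matrix with diagonal `a 1 < ⋯ < a n` is conjugate,
by a unipotent upper triangular matrix in `GL_n(ℤ)`, to an upper triangular matrix
whose `(i,j)` entry `c i j` satisfies `0 ≤ c i j < a j - a i` for all `i < j`. -/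
theorem stmt_4 (n : ℕ) (a : Fin n → ℤ) (ha : StrictMono a)
    (A : Matrix (Fin n) (Fin n) ℤ)
    (hA : A.BlockTriangular id) (hAd : ∀ i, A i i = a i) :
    ∃ P : Matrix.GeneralLinearGroup (Fin n) ℤ,
      (P : Matrix (Fin n) (Fin n) ℤ).BlockTriangular id ∧
      (∀ i, (P : Matrix (Fin n) (Fin n) ℤ) i i = 1) ∧
      (let B := (P : Matrix (Fin n) (Fin n) ℤ) * A *
        ((P⁻¹ : Matrix.GeneralLinearGroup (Fin n) ℤ) : Matrix (Fin n) (Fin n) ℤ)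
       B.BlockTriangular id ∧ (∀ i, B i i = a i) ∧
         ∀ i j : Fin n, i < j → 0 ≤ B i j ∧ B i j < a j - a i) := by
  obtain ⟨P, Q, hPQ, hQP, hPt, hQt, hPd, hQd, hBt, hBd, hBgood⟩ :=
    Stmt4Aux.key a ha n A hA hAd
  refine ⟨⟨P, Q, hPQ, hQP⟩, hPt, hPd, ?_⟩
  refine ⟨hBt, hBd, ?_⟩
  intro i j hij
  exact hBgood i j hij (by have := j.isLt; omega)
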